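/- For K ≥ 1 let D_K be the K×K real matrix with (D_K)_{1,j} = 1/2 for all j, (D_K)_{i,j} = 1/4 for i ≥ 2 and j ≥ i−1, and (D_K)_{i,j} = 0 otherwise. Then for every k ≥ 1 and every K ≥ k+1, the first column of the k-th power of D_K is given by: (D_K^k)_{1,1} = C(2k, k)/4^k, (D_K^k)_{i,1} = C(2k+1−i, k+1−i)/4^k for 2 ≤ i ≤ k+1, and (D_K^k)_{i,1} = 0 for i > k+1, where C(a,b) denotes the binomial coefficient. In particular (D_K^k)_{1,1} ≥ c/√k for some constant c > 0, so Σ_{k ≥ 1} (D_{k+1}^k)_{1,1} = ∞. -/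

import Mathlib

open MeasureTheory Set Filter Topology

/-- The matrix `D_K` (1-based indexing in the paper; `i : Fin K` corresponds to
row `i+1`): first row all `1/2`, rows `i ≥ 2` have `1/4` in columns `j ≥ i-1`,
zeros elsewhere. -/
noncomputable def DK (K : ℕ) : Matrix (Fin K) (Fin K) ℝ :=
  fun i j =>
    if i.val = 0 then 1/2
    else if i.val ≤ j.val + 1 then 1/4
    else 0

/-- The claimed value of the first column of `D_K^k`. -/
noncomputable def Gfun (k i : ℕ) : ℝ :=
  if i ≤ k then (Nat.choose (2*k - i) (k - i) : ℝ) / 4^k else 0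

lemma sum_choose_aux (k a : ℕ) (ha : a ≤ k) :
    ∑ m ∈ Finset.Icc a k, Nat.choose (2*k - m) (k - m)
      = Nat.choose (2*k + 1 - a) (k - a) := by
  have h1 : ∀ m ∈ Finset.Icc a k,
      Nat.choose (2*k - m) (k - m) = Nat.choose (2*k - m) k := by
    intro m hm
    simp only [Finset.mem_Icc] at hm
    have h : (2*k - m) - (k - m) = k := by omega
    have hsymm := Nat.choose_symm (show k - m ≤ 2*k - m by omega)
    rw [← hsymm, h]
  rw [Finset.sum_congr rfl h1]
  have h2 : ∑ m ∈ Finset.Icc a k, Nat.choose (2*k - m) k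
      = ∑ m ∈ Finset.Icc k (2*k - a), Nat.choose m k := by
    refine Finset.sum_nbij' (fun m => 2*k - m) (fun m => 2*k - m) ?_ ?_ ?_ ?_ ?_ <;>
      intro m hm <;> simp only [Finset.mem_Icc] at * <;> omega
  rw [h2, Nat.sum_Icc_choose]
  have e1 : 2*k - a + 1 = 2*k + 1 - a := by omega
  rw [e1]
  have e2 : (2*k + 1 - a) - (k + 1) = k - a := by omega
  rw [← e2, Nat.choose_symm (by omega)]

lemma DK_pow_col (k : ℕ) (hk : 1 ≤ k) :
    ∀ K : ℕ, k + 1 ≤ K → ∀ i j : Fin K, j.val = 0 →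
      (DK K ^ k) i j = Gfun k i.val := by
  induction k, hk using Nat.le_induction with
  | base =>
    intro K hK i j hj
    rw [pow_one]
    simp only [DK, Gfun, hj]
    by_cases h0 : i.val = 0
    · simp [h0]
      norm_num
    · by_cases h1 : i.val ≤ 1
      · have hi1 : i.val = 1 := by omega
        simp [h0, hi1]
      · simp [h0, h1]
  | succ k hk ih =>
    intro K hK i j hj
    rw [pow_succ', Matrix.mul_apply]
    have hIH : ∀ x : Fin K, (DK K ^ k) x j = Gfun k x.val :=
      fun x => ih K (by omega) x j hj
    have hstep : ∀ x : Fin K, DK K i x * (DK K ^ k) x j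
        = (if i.val = 0 then (1:ℝ)/2 else if i.val ≤ x.val + 1 then 1/4 else 0)
            * Gfun k x.val := by
      intro x; rw [hIH x]; rfl
    rw [Finset.sum_congr rfl (fun x _ => hstep x)]
    rw [Fin.sum_univ_eq_sum_range
      (fun m => (if i.val = 0 then (1:ℝ)/2 else if i.val ≤ m + 1 then 1/4 else 0)
          * Gfun k m) K]
    by_cases h0 : i.val = 0
    · have hsimp : ∀ m : ℕ, (if i.val = 0 then (1:ℝ)/2 else if i.val ≤ m + 1 then 1/4 else 0) = 1/2 :=
        fun m => if_pos h0
      simp only [hsimp]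
      have hsub : Finset.Icc 0 k ⊆ Finset.range K := by
        intro m hm; simp only [Finset.mem_Icc] at hm; simp only [Finset.mem_range]; omega
      rw [← Finset.sum_subset hsub (by
        intro m hm hnot
        simp only [Finset.mem_Icc, Finset.mem_range] at *
        have : ¬ m ≤ k := by omega
        simp [Gfun, this])]
      have hterm : ∀ m ∈ Finset.Icc 0 k,
          (1/2 : ℝ) * Gfun k m = (1/2) * ((Nat.choose (2*k - m) (k - m) : ℝ) / 4^k) := by
        intro m hm
        simp only [Finset.mem_Icc] at hm
        simp [Gfun, hm.2]
      rw [Finset.sum_congr rfl hterm]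
      have hsum : ∑ m ∈ Finset.Icc 0 k,
          ((1/2 : ℝ) * ((Nat.choose (2*k - m) (k - m) : ℝ) / 4^k))
          = (1/2) / 4^k * ((Nat.choose (2*k + 1) k : ℝ)) := by
        rw [← Finset.mul_sum, ← Finset.sum_div, ← Nat.cast_sum]
        rw [sum_choose_aux k 0 (by omega)]
        norm_num
        ring
      rw [hsum]
      have hc : Nat.choose (2*(k+1)) (k+1) = 2 * Nat.choose (2*k+1) k := by
        have e : 2*(k+1) = (2*k+1) + 1 := by ring
        rw [e, Nat.choose_succ_succ]
        have hsymm : Nat.choose (2*k+1) (k+1) = Nat.choose (2*k+1) k := by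
          rw [← Nat.choose_symm (show k + 1 ≤ 2*k+1 by omega)]
          congr 1
          omega
        simp only [Nat.succ_eq_add_one]
        omega
      have hG : Gfun (k+1) 0 = (Nat.choose (2*(k+1)) (k+1) : ℝ) / 4^(k+1) := by
        simp [Gfun]
      rw [h0, hG, hc]
      rw [pow_succ]
      push_cast
      ring
    · by_cases hib : i.val ≤ k + 1
      · have hi1 : 1 ≤ i.val := by omega
        have hsub : Finset.Icc (i.val - 1) k ⊆ Finset.range K := by
          intro m hm; simp only [Finset.mem_Icc] at hm; simp only [Finset.mem_range]; omega
        rw [← Finset.sum_subset hsub (by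
          intro m hm hnot
          simp only [Finset.mem_Icc, Finset.mem_range] at *
          by_cases hmk : m ≤ k
          · have : ¬ i.val ≤ m + 1 := by omega
            simp [h0, this]
          · simp [Gfun, hmk])]
        have hterm : ∀ m ∈ Finset.Icc (i.val - 1) k,
            (if i.val = 0 then (1:ℝ)/2 else if i.val ≤ m + 1 then 1/4 else 0) * Gfun k m
              = (1/4) * ((Nat.choose (2*k - m) (k - m) : ℝ) / 4^k) := by
          intro m hm
          simp only [Finset.mem_Icc] at hm
          have h1 : i.val ≤ m + 1 := by omega
          simp [Gfun, h0, h1, hm.2]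
        rw [Finset.sum_congr rfl hterm]
        have hsum : ∑ m ∈ Finset.Icc (i.val - 1) k,
            ((1/4 : ℝ) * ((Nat.choose (2*k - m) (k - m) : ℝ) / 4^k))
            = (1/4) / 4^k * ((Nat.choose (2*k + 1 - (i.val - 1)) (k - (i.val - 1)) : ℝ)) := by
          rw [← Finset.mul_sum, ← Finset.sum_div, ← Nat.cast_sum]
          rw [sum_choose_aux k (i.val - 1) (by omega)]
          ring
        rw [hsum]
        have e1 : 2*k + 1 - (i.val - 1) = 2*(k+1) - i.val := by omega
        have e2 : k - (i.val - 1) = (k+1) - i.val := by omega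
        rw [e1, e2]
        have hG : Gfun (k+1) i.val
            = (Nat.choose (2*(k+1) - i.val) ((k+1) - i.val) : ℝ) / 4^(k+1) := by
          simp [Gfun, hib]
        rw [hG, pow_succ]
        ring
      · have hG : Gfun (k+1) i.val = 0 := by
          simp only [Gfun]
          rw [if_neg (by omega)]
        rw [hG]
        apply Finset.sum_eq_zero
        intro m hm
        by_cases hmk : m ≤ k
        · have : ¬ i.val ≤ m + 1 := by omega
          simp [h0, this]
        · simp [Gfun, hmk]

lemma cb_low (k : ℕ) (hk : 1 ≤ k) :
    (1/2 : ℝ) / Real.sqrt k ≤ (Nat.choose (2*k) k : ℝ) / 4^k := by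
  induction k, hk using Nat.le_induction with
  | base => norm_num [Real.sqrt_one]
  | succ k hk ih =>
    have hk0 : (0:ℝ) < (k:ℝ) := by exact_mod_cast hk
    have hs : 0 < Real.sqrt k := Real.sqrt_pos.mpr hk0
    have ht : 0 < Real.sqrt ((k:ℝ)+1) := Real.sqrt_pos.mpr (by positivity)
    have hN := Nat.succ_mul_centralBinom_succ k
    simp only [Nat.centralBinom] at hN
    have hR : ((k:ℝ)+1) * (Nat.choose (2*(k+1)) (k+1) : ℝ)
        = 2*(2*(k:ℝ)+1) * (Nat.choose (2*k) k : ℝ) := by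
      exact_mod_cast congrArg (Nat.cast : ℕ → ℝ) hN
    have e : (Nat.choose (2*(k+1)) (k+1) : ℝ) / 4^(k+1)
        = (2*(k:ℝ)+1)/(2*((k:ℝ)+1)) * ((Nat.choose (2*k) k : ℝ) / 4^k) := by
      rw [pow_succ]
      have h4 : (4:ℝ)^k ≠ 0 := by positivity
      have hk1 : ((k:ℝ)+1) ≠ 0 := by positivity
      field_simp
      linear_combination 2 * hR
    have hkey : 2*((k:ℝ)+1) * Real.sqrt k ≤ (2*(k:ℝ)+1) * Real.sqrt ((k:ℝ)+1) := by
      have h1 : 2*((k:ℝ)+1) * Real.sqrt k = Real.sqrt ((2*((k:ℝ)+1))^2 * k) := by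
        rw [Real.sqrt_mul (by positivity), Real.sqrt_sq (by positivity)]
      have h2 : (2*(k:ℝ)+1) * Real.sqrt ((k:ℝ)+1)
          = Real.sqrt ((2*(k:ℝ)+1)^2 * ((k:ℝ)+1)) := by
        rw [Real.sqrt_mul (by positivity), Real.sqrt_sq (by positivity)]
      rw [h1, h2]
      apply Real.sqrt_le_sqrt
      nlinarith [hk0.le]
    have hcast : ((k+1 : ℕ) : ℝ) = (k:ℝ) + 1 := by push_cast; ring
    rw [hcast, e]
    calc (1/2 : ℝ) / Real.sqrt ((k:ℝ)+1)
        ≤ (2*(k:ℝ)+1)/(2*((k:ℝ)+1)) * ((1/2) / Real.sqrt k) := by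
          rw [div_mul_div_comm, div_le_div_iff₀ (by positivity) (by positivity)]
          nlinarith [hkey, hs.le, ht.le]
      _ ≤ (2*(k:ℝ)+1)/(2*((k:ℝ)+1)) * ((Nat.choose (2*k) k : ℝ) / 4^k) := by
          apply mul_le_mul_of_nonneg_left ih (by positivity)

/-- for `k ≥ 1` and `K ≥ k+1`, the first column of `D_K^k` is given
by binomial coefficients: `(D_K^k)_{1,1} = C(2k,k)/4^k`,
`(D_K^k)_{i,1} = C(2k+1-i, k+1-i)/4^k` for `2 ≤ i ≤ k+1`, and `0` for `i > k+1`.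
In particular `(D_K^k)_{1,1} ≥ c/√k` for some `c > 0`, so the series
`∑_{k ≥ 1} (D_{k+1}^k)_{1,1}` diverges. -/
theorem stmt19 :
    (∀ k K : ℕ, 1 ≤ k → k + 1 ≤ K → ∀ i j : Fin K, j.val = 0 →
      (DK K ^ k) i j =
        (if i.val = 0 then (Nat.choose (2*k) k : ℝ) / 4^k
         else if i.val ≤ k then
           (Nat.choose (2*k - i.val) (k - i.val) : ℝ) / 4^k
         else 0)) ∧
    (∃ c : ℝ, 0 < c ∧ ∀ k K : ℕ, 1 ≤ k → k + 1 ≤ K → ∀ i j : Fin K,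
      i.val = 0 → j.val = 0 → c / Real.sqrt k ≤ (DK K ^ k) i j) ∧
    ¬ Summable (fun k : ℕ => ((DK (k+2)) ^ (k+1)) 0 0) := by
  have main : ∀ k K : ℕ, 1 ≤ k → k + 1 ≤ K → ∀ i j : Fin K, j.val = 0 →
      (DK K ^ k) i j = Gfun k i.val := fun k K hk hK => DK_pow_col k hk K hK
  have part1 : ∀ k K : ℕ, 1 ≤ k → k + 1 ≤ K → ∀ i j : Fin K, j.val = 0 →
      (DK K ^ k) i j =
        (if i.val = 0 then (Nat.choose (2*k) k : ℝ) / 4^k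
         else if i.val ≤ k then (Nat.choose (2*k - i.val) (k - i.val) : ℝ) / 4^k
         else 0) := by
    intro k K hk hK i j hj
    rw [main k K hk hK i j hj]
    by_cases h0 : i.val = 0
    · simp [Gfun, h0, hk]
    · simp [Gfun, h0]
  refine ⟨part1, ⟨1/2, by norm_num, ?_⟩, ?_⟩
  · intro k K hk hK i j hi hj
    rw [main k K hk hK i j hj, hi]
    have : Gfun k 0 = (Nat.choose (2*k) k : ℝ) / 4^k := by simp [Gfun]
    rw [this]
    exact cb_low k hk
  · intro hsum
    have hval : ∀ k : ℕ, (DK (k+2) ^ (k+1)) 0 0 = (Nat.choose (2*(k+1)) (k+1) : ℝ) / 4^(k+1) := by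
      intro k
      rw [main (k+1) (k+2) (by omega) (by omega) 0 0 rfl]
      simp [Gfun]
    have hle : ∀ k : ℕ, (1/2 : ℝ) / ((k:ℝ)+1) ≤ (DK (k+2) ^ (k+1)) 0 0 := by
      intro k
      rw [hval k]
      have h1 : Real.sqrt ((k:ℝ)+1) ≤ (k:ℝ)+1 := by
        have : Real.sqrt ((k:ℝ)+1) ≤ Real.sqrt (((k:ℝ)+1)^2) :=
          Real.sqrt_le_sqrt (by nlinarith [Nat.cast_nonneg (α := ℝ) k])
        rwa [Real.sqrt_sq (by positivity)] at this
      have h2 : (1/2 : ℝ) / ((k:ℝ)+1) ≤ (1/2) / Real.sqrt ((k:ℝ)+1) := by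
        apply div_le_div_of_nonneg_left (by norm_num) (Real.sqrt_pos.mpr (by positivity)) h1
      refine h2.trans ?_
      have := cb_low (k+1) (by omega)
      have hcast : ((k+1 : ℕ) : ℝ) = (k:ℝ) + 1 := by push_cast; ring
      rwa [hcast] at this
    have hsum2 : Summable (fun k : ℕ => (1/2 : ℝ) / ((k:ℝ)+1)) :=
      Summable.of_nonneg_of_le (fun k => by positivity) hle hsum
    have hsum3 : Summable (fun k : ℕ => (1 : ℝ) / ((k:ℝ)+1)) := by
      have := hsum2.mul_left 2
      convert this using 2 with k
      · rfl
      ring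
    have hsum4 : Summable (fun n : ℕ => (1 : ℝ) / (n:ℝ)) := by
      rw [← summable_nat_add_iff 1]
      convert hsum3 using 2 with k
      · rfl
      push_cast
      ring
    exact Real.not_summable_one_div_natCast hsum4
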